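/- arXiv:1401.7397 — 4 statements merged into one kernel-verified Lean document; each statement's English description precedes it below -/
import Mathlib

section
/- (Euler's decomposition formula) For positive integers m and n, one has ζ(m+1) · ζ(n+1) = Σ_{j=1}^{n+1} C(m+n-j+1, m) · ζ(m+n+2-j, j) + Σ_{j=1}^{m+1} C(m+n-j+1, n) · ζ(m+n+2-j, j). -/
open Finset

/-- The multiple zeta value `ζ(s₁, …, s_k) = ∑_{n₁ > n₂ > ⋯ > n_k ≥ 1} 1/(n₁^{s₁} ⋯ n_k^{s_k})`,
where the exponent string is given as a list. -/
noncomputable def mzv (s : List ℕ) : ℝ :=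
  ∑' n : {f : Fin s.length → ℕ //
      (∀ i j : Fin s.length, i < j → f j < f i) ∧ ∀ i, 1 ≤ f i},
    ∏ i : Fin s.length, ((n.1 i : ℝ) ^ s.get i)⁻¹



lemma pf_base (n : ℕ) (x y : ℝ) (hx : 0 < x) (hy : 0 < y) :
    (x ^ (0 + 1))⁻¹ * (y ^ (n + 1))⁻¹ =
      (∑ i ∈ Finset.range (0 + 1),
        (Nat.choose (n + i) i : ℝ) * ((x ^ (0 - i + 1))⁻¹ * ((x + y) ^ (n + i + 1))⁻¹))
      + ∑ i ∈ Finset.range (n + 1),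
        (Nat.choose (0 + i) i : ℝ) * ((y ^ (n - i + 1))⁻¹ * ((x + y) ^ (0 + i + 1))⁻¹) := by
  have hz : 0 < x + y := by linarith
  induction n with
  | zero =>
    simp only [Finset.sum_range_one, Nat.choose_self, Nat.choose_zero_right, Nat.cast_one,
      Nat.add_zero, Nat.zero_add]
    field_simp
    ring
  | succ n ih =>
    have key : (x ^ (0 + 1))⁻¹ * (y ^ (n + 1 + 1))⁻¹ =
        ((x ^ (0 + 1))⁻¹ * (y ^ (n + 1))⁻¹) * (x + y)⁻¹ + (y ^ (n + 1 + 1))⁻¹ * (x + y)⁻¹ := by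
      field_simp
      ring
    rw [key, ih]
    simp only [Finset.sum_range_one, Nat.choose_self, Nat.choose_zero_right, Nat.cast_one,
      Nat.zero_add, Nat.add_zero, Nat.zero_sub]
    rw [Finset.sum_range_succ' (fun i => (1 : ℝ) *
        ((y ^ (n + 1 - i + 1))⁻¹ * ((x + y) ^ (i + 1))⁻¹)) (n + 1)]
    simp only [Nat.succ_sub_succ, Nat.sub_zero]
    rw [add_mul, Finset.sum_mul]
    have : ∀ i ∈ Finset.range (n + 1),
        (1 : ℝ) * ((y ^ (n - i + 1))⁻¹ * ((x + y) ^ (i + 1))⁻¹) * (x + y)⁻¹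
        = (1 : ℝ) * ((y ^ (n - i + 1))⁻¹ * ((x + y) ^ (i + 1 + 1))⁻¹) := by
      intro i _
      rw [pow_succ ((x+y)) (i+1)]
      field_simp
    rw [Finset.sum_congr rfl this]
    have hx1 : (1:ℝ) * ((x ^ 1)⁻¹ * ((x + y) ^ (n + 1))⁻¹) * (x + y)⁻¹
        = 1 * ((x ^ 1)⁻¹ * ((x + y) ^ (n + 1 + 1))⁻¹) := by
      rw [pow_succ ((x+y)) (n+1)]; field_simp
    rw [hx1]
    ring

lemma partialFraction : ∀ (m n : ℕ) (x y : ℝ), 0 < x → 0 < y →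
    (x ^ (m + 1))⁻¹ * (y ^ (n + 1))⁻¹ =
      (∑ i ∈ Finset.range (m + 1),
        (Nat.choose (n + i) i : ℝ) * ((x ^ (m - i + 1))⁻¹ * ((x + y) ^ (n + i + 1))⁻¹))
      + ∑ i ∈ Finset.range (n + 1),
        (Nat.choose (m + i) i : ℝ) * ((y ^ (n - i + 1))⁻¹ * ((x + y) ^ (m + i + 1))⁻¹) := by
  intro m
  induction m with
  | zero => exact fun n x y hx hy => pf_base n x y hx hy
  | succ m ihm =>
    intro n
    induction n with
    | zero =>
      intro x y hx hy
      have h := pf_base (m + 1) y x hy hx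
      rw [add_comm y x, mul_comm ((y ^ (0 + 1))⁻¹)] at h
      linarith
    | succ n ihn =>
      intro x y hx hy
      have hx' : x ≠ 0 := ne_of_gt hx
      have hy' : y ≠ 0 := ne_of_gt hy
      have hz' : x + y ≠ 0 := by positivity
      have key : (x ^ (m + 1 + 1))⁻¹ * (y ^ (n + 1 + 1))⁻¹ =
          ((x ^ (m + 1))⁻¹ * (y ^ (n + 1 + 1))⁻¹
            + (x ^ (m + 1 + 1))⁻¹ * (y ^ (n + 1))⁻¹) * (x + y)⁻¹ := by
        field_simp
        ring
      have hC1 : (∑ i ∈ Finset.range (m + 1 + 1),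
            (Nat.choose (n + 1 + i) i : ℝ) * ((x ^ (m + 1 - i + 1))⁻¹ * ((x + y) ^ (n + 1 + i + 1))⁻¹))
          = (∑ i ∈ Finset.range (m + 1),
              (Nat.choose (n + 1 + i) i : ℝ) * ((x ^ (m - i + 1))⁻¹ * ((x + y) ^ (n + 1 + i + 1))⁻¹)) * (x + y)⁻¹
            + (∑ i ∈ Finset.range (m + 1 + 1),
              (Nat.choose (n + i) i : ℝ) * ((x ^ (m + 1 - i + 1))⁻¹ * ((x + y) ^ (n + i + 1))⁻¹)) * (x + y)⁻¹ := by
        rw [Finset.sum_range_succ' (fun i => (Nat.choose (n + 1 + i) i : ℝ) *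
              ((x ^ (m + 1 - i + 1))⁻¹ * ((x + y) ^ (n + 1 + i + 1))⁻¹)) (m + 1),
            Finset.sum_range_succ' (fun i => (Nat.choose (n + i) i : ℝ) *
              ((x ^ (m + 1 - i + 1))⁻¹ * ((x + y) ^ (n + i + 1))⁻¹)) (m + 1),
            Finset.sum_mul, add_mul, Finset.sum_mul, ← add_assoc, ← Finset.sum_add_distrib]
        congr 1
        · refine Finset.sum_congr rfl fun i hi => ?_
          have e1 : n + 1 + (i + 1) = (n + 1 + i) + 1 := rfl
          rw [e1, Nat.choose_succ_succ]
          push_cast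
          simp only [Nat.succ_eq_add_one, show n + (i + 1) = n + 1 + i by omega]
          field_simp
          ring
        · simp only [Nat.choose_zero_right, Nat.cast_one, Nat.sub_zero, Nat.add_zero]
          field_simp
          ring
      have hterm : ∀ i ∈ Finset.range (n + 1),
          (Nat.choose (m + 1 + (i + 1)) (i + 1) : ℝ) *
              ((y ^ (n + 1 - (i + 1) + 1))⁻¹ * ((x + y) ^ (m + 1 + (i + 1) + 1))⁻¹)
          = (Nat.choose (m + (i + 1)) (i + 1) : ℝ) *
              ((y ^ (n + 1 - (i + 1) + 1))⁻¹ * ((x + y) ^ (m + (i + 1) + 1))⁻¹) * (x + y)⁻¹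
            + (Nat.choose (m + 1 + i) i : ℝ) *
              ((y ^ (n - i + 1))⁻¹ * ((x + y) ^ (m + 1 + i + 1))⁻¹) * (x + y)⁻¹ := by
        intro i hi
        have e1 : m + 1 + (i + 1) = (m + 1 + i) + 1 := rfl
        have e2 : m + (i + 1) = m + 1 + i := by omega
        rw [e1, Nat.choose_succ_succ, e2]
        push_cast
        try simp only [Nat.succ_sub_succ]
        field_simp
        ring
      have hconst : (Nat.choose (m + 1 + 0) 0 : ℝ) *
            ((y ^ (n + 1 - 0 + 1))⁻¹ * ((x + y) ^ (m + 1 + 0 + 1))⁻¹)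
          = (Nat.choose (m + 0) 0 : ℝ) *
            ((y ^ (n + 1 - 0 + 1))⁻¹ * ((x + y) ^ (m + 0 + 1))⁻¹) * (x + y)⁻¹ := by
        simp only [Nat.choose_zero_right, Nat.cast_one, Nat.add_zero, one_mul]
        rw [pow_succ (x + y) (m + 1)]
        field_simp
      have hC2 : (∑ i ∈ Finset.range (n + 1 + 1),
            (Nat.choose (m + 1 + i) i : ℝ) * ((y ^ (n + 1 - i + 1))⁻¹ * ((x + y) ^ (m + 1 + i + 1))⁻¹))
          = (∑ i ∈ Finset.range (n + 1 + 1),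
              (Nat.choose (m + i) i : ℝ) * ((y ^ (n + 1 - i + 1))⁻¹ * ((x + y) ^ (m + i + 1))⁻¹)) * (x + y)⁻¹
            + (∑ i ∈ Finset.range (n + 1),
              (Nat.choose (m + 1 + i) i : ℝ) * ((y ^ (n - i + 1))⁻¹ * ((x + y) ^ (m + 1 + i + 1))⁻¹)) * (x + y)⁻¹ := by
        rw [Finset.sum_range_succ' (fun i => (Nat.choose (m + 1 + i) i : ℝ) *
              ((y ^ (n + 1 - i + 1))⁻¹ * ((x + y) ^ (m + 1 + i + 1))⁻¹)) (n + 1),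
            Finset.sum_range_succ' (fun i => (Nat.choose (m + i) i : ℝ) *
              ((y ^ (n + 1 - i + 1))⁻¹ * ((x + y) ^ (m + i + 1))⁻¹)) (n + 1),
            Finset.sum_congr rfl hterm, Finset.sum_add_distrib, hconst,
            add_mul, Finset.sum_mul, Finset.sum_mul]
        ring
      rw [key, ihm (n + 1) x y hx hy, ihn x y hx hy, hC1, hC2]
      ring

def singleEquiv : ℕ+ ≃ {f : Fin 1 → ℕ //
    (∀ i j : Fin 1, i < j → f j < f i) ∧ ∀ i, 1 ≤ f i} where
  toFun a := ⟨fun _ => a, fun i j hij => absurd hij (by omega), fun _ => a.2⟩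
  invFun f := ⟨f.1 0, f.2.2 0⟩
  left_inv a := rfl
  right_inv f := by
    apply Subtype.ext
    funext i
    have : i = 0 := Subsingleton.elim i 0
    rw [this]
    rfl

lemma mzv_single (s : ℕ) : mzv [s] = ∑' a : ℕ+, ((a : ℝ) ^ s)⁻¹ := by
  have h1 : mzv [s] = ∑' n : {f : Fin 1 → ℕ //
      (∀ i j : Fin 1, i < j → f j < f i) ∧ ∀ i, 1 ≤ f i}, ((n.1 0 : ℝ) ^ s)⁻¹ := by
    rw [mzv]
    exact tsum_congr fun n => Fin.prod_univ_one fun i => ((n.1 i : ℝ) ^ [s].get i)⁻¹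
  rw [h1, ← singleEquiv.tsum_eq]
  rfl

def doubleEquiv : ℕ+ × ℕ+ ≃ {f : Fin 2 → ℕ //
    (∀ i j : Fin 2, i < j → f j < f i) ∧ ∀ i, 1 ≤ f i} where
  toFun x := ⟨fun i => if i = 0 then (x.1 : ℕ) + (x.2 : ℕ) else (x.2 : ℕ), by
    refine ⟨fun i j hij => ?_, fun i => ?_⟩
    · dsimp only
      fin_cases i <;> fin_cases j <;>
      first
      | exact absurd hij (by decide)
      | (rw [if_neg (by decide), if_pos (by decide)]
         have h1 : 1 ≤ (x.1 : ℕ) := x.1.2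
         have h2 : 1 ≤ (x.2 : ℕ) := x.2.2
         omega)
    · dsimp only
      by_cases h : i = 0
      · rw [if_pos h]
        have h1 : 1 ≤ (x.1 : ℕ) := x.1.2
        have h2 : 1 ≤ (x.2 : ℕ) := x.2.2
        omega
      · rw [if_neg h]
        exact x.2.2⟩
  invFun f := (⟨f.1 0 - f.1 1, by
      have h01 := f.2.1 0 1 (by decide)
      omega⟩, ⟨f.1 1, f.2.2 1⟩)
  left_inv x := by
    obtain ⟨⟨a, ha⟩, ⟨b, hb⟩⟩ := x
    refine Prod.ext (PNat.coe_injective ?_) (PNat.coe_injective ?_) <;> simp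
  right_inv f := by
    have h01 : f.1 1 < f.1 0 := f.2.1 0 1 (by decide)
    apply Subtype.ext
    funext i
    fin_cases i
    · show f.1 0 - f.1 1 + f.1 1 = f.1 0
      omega
    · simp

lemma mzv_double (p q : ℕ) : mzv [p, q] =
    ∑' x : ℕ+ × ℕ+, ((((x.1 : ℕ) : ℝ) + ((x.2 : ℕ) : ℝ)) ^ p)⁻¹ * (((x.2 : ℕ) : ℝ) ^ q)⁻¹ := by
  have h1 : mzv [p, q] = ∑' n : {f : Fin 2 → ℕ //
      (∀ i j : Fin 2, i < j → f j < f i) ∧ ∀ i, 1 ≤ f i},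
      ((n.1 0 : ℝ) ^ p)⁻¹ * ((n.1 1 : ℝ) ^ q)⁻¹ := by
    rw [mzv]
    exact tsum_congr fun n => Fin.prod_univ_two fun i => ((n.1 i : ℝ) ^ [p, q].get i)⁻¹
  rw [h1, ← doubleEquiv.tsum_eq]
  refine tsum_congr fun x => ?_
  simp only [doubleEquiv, Equiv.coe_fn_mk]
  norm_num

lemma zeta_summable {s : ℕ} (hs : 2 ≤ s) :
    Summable (fun a : ℕ+ => (((a : ℕ) : ℝ) ^ s)⁻¹) := by
  have h : Summable (fun n : ℕ => ((n : ℝ) ^ s)⁻¹) :=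
    Real.summable_nat_pow_inv.mpr (by omega)
  exact h.comp_injective PNat.coe_injective

noncomputable def eulerG (m n i : ℕ) (x : ℕ+ × ℕ+) : ℝ :=
  (Nat.choose (n + i) i : ℝ) *
    ((((x.1 : ℕ) : ℝ) ^ (m - i + 1))⁻¹ *
      (((((x.1 : ℕ) : ℝ)) + (((x.2 : ℕ) : ℝ))) ^ (n + i + 1))⁻¹)

noncomputable def eulerH (m n i : ℕ) (x : ℕ+ × ℕ+) : ℝ :=
  (Nat.choose (m + i) i : ℝ) *
    ((((x.2 : ℕ) : ℝ) ^ (n - i + 1))⁻¹ *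
      (((((x.1 : ℕ) : ℝ)) + (((x.2 : ℕ) : ℝ))) ^ (m + i + 1))⁻¹)

noncomputable def eulerF (m n : ℕ) (x : ℕ+ × ℕ+) : ℝ :=
  ((((x.1 : ℕ) : ℝ)) ^ (m + 1))⁻¹ * ((((x.2 : ℕ) : ℝ)) ^ (n + 1))⁻¹

/-- Euler's decomposition formula. -/
theorem euler_decomposition (m n : ℕ) (hm : 1 ≤ m) (hn : 1 ≤ n) :
    mzv [m + 1] * mzv [n + 1] =
      (∑ j ∈ Finset.Icc 1 (n + 1),
        (Nat.choose (m + n - j + 1) m : ℝ) * mzv [m + n + 2 - j, j])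
      + ∑ j ∈ Finset.Icc 1 (m + 1),
        (Nat.choose (m + n - j + 1) n : ℝ) * mzv [m + n + 2 - j, j] := by
  have hpos : ∀ x : ℕ+ × ℕ+, (0:ℝ) < ((x.1 : ℕ) : ℝ) ∧ (0:ℝ) < ((x.2 : ℕ) : ℝ) := by
    intro x
    exact ⟨by exact_mod_cast x.1.2, by exact_mod_cast x.2.2⟩
  have hFsummable : Summable (eulerF m n) :=
    Summable.mul_of_nonneg (f := fun a : ℕ+ => (((a : ℕ) : ℝ) ^ (m + 1))⁻¹)
      (g := fun a : ℕ+ => (((a : ℕ) : ℝ) ^ (n + 1))⁻¹)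
      (zeta_summable (by omega)) (zeta_summable (by omega))
      (fun a => by positivity) (fun a => by positivity)
  have hpointwise : ∀ x : ℕ+ × ℕ+,
      eulerF m n x = (∑ i ∈ Finset.range (m + 1), eulerG m n i x)
        + ∑ i ∈ Finset.range (n + 1), eulerH m n i x := by
    intro x
    exact partialFraction m n _ _ (hpos x).1 (hpos x).2
  have hGnonneg : ∀ i (x : ℕ+ × ℕ+), 0 ≤ eulerG m n i x := fun i x => by
    rw [eulerG]; positivity
  have hHnonneg : ∀ i (x : ℕ+ × ℕ+), 0 ≤ eulerH m n i x := fun i x => by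
    rw [eulerH]; positivity
  have hGsummable : ∀ i ∈ Finset.range (m + 1), Summable (eulerG m n i) := by
    intro i hi
    refine hFsummable.of_nonneg_of_le (hGnonneg i) fun x => ?_
    rw [hpointwise x]
    have h1 : eulerG m n i x ≤ ∑ i' ∈ Finset.range (m + 1), eulerG m n i' x :=
      Finset.single_le_sum (fun j _ => hGnonneg j x) hi
    have h2 : (0:ℝ) ≤ ∑ i' ∈ Finset.range (n + 1), eulerH m n i' x :=
      Finset.sum_nonneg fun j _ => hHnonneg j x
    linarith
  have hHsummable : ∀ i ∈ Finset.range (n + 1), Summable (eulerH m n i) := by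
    intro i hi
    refine hFsummable.of_nonneg_of_le (hHnonneg i) fun x => ?_
    rw [hpointwise x]
    have h1 : eulerH m n i x ≤ ∑ i' ∈ Finset.range (n + 1), eulerH m n i' x :=
      Finset.single_le_sum (fun j _ => hHnonneg j x) hi
    have h2 : (0:ℝ) ≤ ∑ i' ∈ Finset.range (m + 1), eulerG m n i' x :=
      Finset.sum_nonneg fun j _ => hGnonneg j x
    linarith
  have step1 : mzv [m + 1] * mzv [n + 1] = ∑' x : ℕ+ × ℕ+, eulerF m n x := by
    rw [mzv_single, mzv_single]
    have hn1 : Summable (fun a : ℕ+ => ‖(((a : ℕ) : ℝ) ^ (m + 1))⁻¹‖) := by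
      simpa only [Real.norm_eq_abs] using (zeta_summable (s := m + 1) (by omega)).abs
    have hn2 : Summable (fun a : ℕ+ => ‖(((a : ℕ) : ℝ) ^ (n + 1))⁻¹‖) := by
      simpa only [Real.norm_eq_abs] using (zeta_summable (s := n + 1) (by omega)).abs
    exact tsum_mul_tsum_of_summable_norm
      (f := fun a : ℕ+ => (((a : ℕ) : ℝ) ^ (m + 1))⁻¹)
      (g := fun a : ℕ+ => (((a : ℕ) : ℝ) ^ (n + 1))⁻¹) hn1 hn2
  have step2 : ∑' x : ℕ+ × ℕ+, eulerF m n x =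
      (∑ i ∈ Finset.range (m + 1), ∑' x : ℕ+ × ℕ+, eulerG m n i x)
        + ∑ i ∈ Finset.range (n + 1), ∑' x : ℕ+ × ℕ+, eulerH m n i x := by
    rw [tsum_congr hpointwise,
      Summable.tsum_add (summable_sum hGsummable) (summable_sum hHsummable),
      Summable.tsum_finsetSum hGsummable, Summable.tsum_finsetSum hHsummable]
  have step3G : ∀ i ∈ Finset.range (m + 1),
      ∑' x : ℕ+ × ℕ+, eulerG m n i x
        = (Nat.choose (n + i) i : ℝ) * mzv [n + i + 1, m - i + 1] := by
    intro i hi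
    rw [show (fun x => eulerG m n i x) = fun x : ℕ+ × ℕ+ =>
      (Nat.choose (n + i) i : ℝ) * ((((x.1 : ℕ) : ℝ) ^ (m - i + 1))⁻¹ *
        (((((x.1 : ℕ) : ℝ)) + (((x.2 : ℕ) : ℝ))) ^ (n + i + 1))⁻¹) from rfl]
    rw [tsum_mul_left]
    congr 1
    rw [mzv_double]
    have heq := (Equiv.prodComm ℕ+ ℕ+).tsum_eq (fun x : ℕ+ × ℕ+ =>
      ((((x.1 : ℕ) : ℝ) + ((x.2 : ℕ) : ℝ)) ^ (n + i + 1))⁻¹ *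
        (((x.2 : ℕ) : ℝ) ^ (m - i + 1))⁻¹)
    rw [← heq]
    refine tsum_congr fun x => ?_
    simp only [Equiv.prodComm_apply, Prod.fst_swap, Prod.snd_swap]
    ring
  have step3H : ∀ i ∈ Finset.range (n + 1),
      ∑' x : ℕ+ × ℕ+, eulerH m n i x
        = (Nat.choose (m + i) i : ℝ) * mzv [m + i + 1, n - i + 1] := by
    intro i hi
    rw [show (fun x => eulerH m n i x) = fun x : ℕ+ × ℕ+ =>
      (Nat.choose (m + i) i : ℝ) * ((((x.2 : ℕ) : ℝ) ^ (n - i + 1))⁻¹ *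
        (((((x.1 : ℕ) : ℝ)) + (((x.2 : ℕ) : ℝ))) ^ (m + i + 1))⁻¹) from rfl]
    rw [tsum_mul_left]
    congr 1
    rw [mzv_double]
    exact tsum_congr fun x => mul_comm _ _
  have step4G : ∑ i ∈ Finset.range (m + 1),
      (Nat.choose (n + i) i : ℝ) * mzv [n + i + 1, m - i + 1]
      = ∑ j ∈ Finset.Icc 1 (m + 1), (Nat.choose (m + n - j + 1) n : ℝ) * mzv [m + n + 2 - j, j] := by
    refine Finset.sum_nbij' (fun i => m + 1 - i) (fun j => m + 1 - j)
      (fun i hi => ?_) (fun j hj => ?_) (fun i hi => ?_) (fun j hj => ?_) (fun i hi => ?_)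
    · simp only [Finset.mem_range] at hi; simp only [Finset.mem_Icc]; omega
    · simp only [Finset.mem_Icc] at hj; simp only [Finset.mem_range]; omega
    · simp only [Finset.mem_range] at hi; omega
    · simp only [Finset.mem_Icc] at hj; omega
    · simp only [Finset.mem_range] at hi
      have e0 : m + n - (m + 1 - i) + 1 = n + i := by omega
      have e1 : m + n + 2 - (m + 1 - i) = n + i + 1 := by omega
      have e2 : m + 1 - i = m - i + 1 := by omega
      rw [e0, e1, e2]
      have e3 : (n + i).choose n = (n + i).choose i := by
        simpa using Nat.choose_symm (Nat.le_add_left i n)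
      rw [e3]
  have step4H : ∑ i ∈ Finset.range (n + 1),
      (Nat.choose (m + i) i : ℝ) * mzv [m + i + 1, n - i + 1]
      = ∑ j ∈ Finset.Icc 1 (n + 1), (Nat.choose (m + n - j + 1) m : ℝ) * mzv [m + n + 2 - j, j] := by
    refine Finset.sum_nbij' (fun i => n + 1 - i) (fun j => n + 1 - j)
      (fun i hi => ?_) (fun j hj => ?_) (fun i hi => ?_) (fun j hj => ?_) (fun i hi => ?_)
    · simp only [Finset.mem_range] at hi; simp only [Finset.mem_Icc]; omega
    · simp only [Finset.mem_Icc] at hj; simp only [Finset.mem_range]; omega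
    · simp only [Finset.mem_range] at hi; omega
    · simp only [Finset.mem_Icc] at hj; omega
    · simp only [Finset.mem_range] at hi
      have e0 : m + n - (n + 1 - i) + 1 = m + i := by omega
      have e1 : m + n + 2 - (n + 1 - i) = m + i + 1 := by omega
      have e2 : n + 1 - i = n - i + 1 := by omega
      rw [e0, e1, e2]
      have e3 : (m + i).choose m = (m + i).choose i := by
        simpa using Nat.choose_symm (Nat.le_add_left i m)
      rw [e3]
  rw [step1, step2, Finset.sum_congr rfl step3G, Finset.sum_congr rfl step3H,
    step4G, step4H, add_comm]
end

section
/- Let a = a₁⋯a_m and b = b₁⋯b_n be words over X with a_i, b_j ∈ X, and fix k with 1 ≤ k ≤ m. Then a ш b = Σ_{i=0}^{n} ((a₁⋯a_{k-1}) ш (b₁⋯b_i)) a_k ((a_{k+1}⋯a_m) ш (b_{i+1}⋯b_n)), where for two multisets of words S, T and a letter x, S x T denotes the multiset of all concatenations u x v with u ∈ S, v ∈ T (counted with multiplicity), and empty ranges of indices denote the empty word. -/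
/-- The shuffle product of two words, as a multiset of words. -/
def shuffle {X : Type*} : List X → List X → Multiset (List X)
  | u, [] => {u}
  | [], v => {v}
  | a :: u, b :: v =>
      (shuffle u (b :: v)).map (a :: ·) + (shuffle (a :: u) v).map (b :: ·)
termination_by u v => u.length + v.length

/-- `S w T`: the multiset of all concatenations `u ++ w ++ v` with `u ∈ S`, `v ∈ T`,
counted with multiplicity. -/
def msConcat {X : Type*} (S : Multiset (List X)) (w : List X) (T : Multiset (List X)) :
    Multiset (List X) :=
  S.bind fun u => T.map fun v => u ++ w ++ v


lemma shuffle_nil_right {X : Type*} (u : List X) : shuffle u [] = {u} := by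
  cases u <;> rw [shuffle]

lemma shuffle_nil_left {X : Type*} (v : List X) : shuffle [] v = {v} := by
  cases v <;> rw [shuffle] <;> simp

lemma shuffle_cons_cons {X : Type*} (a b : X) (u v : List X) :
    shuffle (a :: u) (b :: v) =
      (shuffle u (b :: v)).map (a :: ·) + (shuffle (a :: u) v).map (b :: ·) := by
  rw [shuffle]

lemma map_cons_msConcat {X : Type*} (c : X) (S T : Multiset (List X)) (x : X) :
    (msConcat S [x] T).map (c :: ·) = msConcat (S.map (c :: ·)) [x] T := by
  simp [msConcat, Multiset.map_bind, Multiset.bind_map, Multiset.map_map, Function.comp]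

lemma msConcat_add_left {X : Type*} (S S' T : Multiset (List X)) (x : X) :
    msConcat (S + S') [x] T = msConcat S [x] T + msConcat S' [x] T := by
  simp [msConcat, Multiset.add_bind]

lemma map_finset_sum' {α β γ : Type*} (s : Finset γ) (g : γ → Multiset α) (f : α → β) :
    (∑ i ∈ s, g i).map f = ∑ i ∈ s, (g i).map f :=
  map_sum (Multiset.mapAddMonoidHom f) g s

lemma shuffle_split {X : Type*} (u : List X) (x : X) (w : List X) :
    ∀ b : List X, shuffle (u ++ x :: w) b =
      ∑ i ∈ Finset.range (b.length + 1),
        msConcat (shuffle u (b.take i)) [x] (shuffle w (b.drop i)) := by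
  induction u with
  | nil =>
    intro b
    induction b with
    | nil => simp [shuffle_nil_right, shuffle_nil_left, msConcat]
    | cons y v ih =>
      simp only [List.nil_append] at ih ⊢
      rw [shuffle_cons_cons, ih, map_finset_sum']
      conv_rhs => rw [Finset.sum_range_succ']
      simp only [List.length_cons, List.take_succ_cons, List.drop_succ_cons,
        List.take_zero, List.drop_zero, shuffle_nil_left, map_cons_msConcat,
        Multiset.map_singleton]
      rw [add_comm]
      congr 1
      simp [msConcat]
  | cons c u' ih =>
    intro b
    induction b with
    | nil =>
      simp [shuffle_nil_right, msConcat]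
    | cons y v ih2 =>
      simp only [List.cons_append] at ih2 ⊢
      rw [shuffle_cons_cons, ih (y :: v), ih2, map_finset_sum', map_finset_sum']
      simp only [map_cons_msConcat]
      conv_rhs => rw [Finset.sum_range_succ']
      conv_lhs => rw [Finset.sum_range_succ' (n := (y :: v).length)]
      simp only [List.length_cons, List.take_succ_cons, List.drop_succ_cons,
        List.take_zero, List.drop_zero, shuffle_nil_left, shuffle_nil_right,
        shuffle_cons_cons, msConcat_add_left, Multiset.map_singleton]
      rw [Finset.sum_add_distrib]
      abel

theorem shuffle_split_at_letter {X : Type*} (a b : List X) (k : ℕ)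
    (hk1 : 1 ≤ k) (hk2 : k ≤ a.length) :
    shuffle a b =
      ∑ i ∈ Finset.range (b.length + 1),
        msConcat (shuffle (a.take (k - 1)) (b.take i))
          [a.get ⟨k - 1, by omega⟩]
          (shuffle (a.drop k) (b.drop i)) := by
  have h : k - 1 < a.length := by omega
  have hdrop : a.drop (k - 1) = a.get ⟨k - 1, h⟩ :: a.drop k := by
    rw [List.drop_eq_getElem_cons h]
    have : k - 1 + 1 = k := by omega
    rw [this]
    simp
  conv_lhs => rw [← List.take_append_drop (k - 1) a, hdrop]
  exact shuffle_split _ _ _ b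
end

section
/- For integers m ≥ 0 and n, k ≥ 1, one has x₁^m ш (x₁^n x₀^k) = Σ_{m₁+m₂=m, m_i ≥ 0} C(m₁+n-1, n-1) · x₁^{m₁+n} 𝔅_{m₂+1}^{k}, an identity of multisets of words, where a binomial coefficient c multiplying a multiset means the multiset repeated c times. -/
/-- The two-letter alphabet `X = {x₀, x₁}`. -/
def x0 : Bool := false
def x1 : Bool := true

/-- `𝔅_r^m`: the multiset of all words `x₀^{m₁} x₁ x₀^{m₂} x₁ ⋯ x₁ x₀^{m_r}`
with `m₁ + ⋯ + m_r = m`, `m_i ≥ 0`. -/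
def B (r m : ℕ) : Multiset (List Bool) :=
  (Finset.Nat.antidiagonalTuple r m).val.map fun f =>
    List.intercalate [x1] (List.ofFn fun i => List.replicate (f i) x0)

lemma B_one (k : ℕ) : B 1 k = {List.replicate k x0} := by
  simp [B, List.intercalate]

lemma intercalate_replicate_nil {α : Type*} (a : α) :
    ∀ r : ℕ, List.intercalate [a] (List.replicate (r + 1) ([] : List α)) = List.replicate r a
  | 0 => by simp [List.intercalate]
  | r + 1 => by
    have := intercalate_replicate_nil a r
    simp only [List.intercalate, List.replicate_succ, List.intersperse] at this ⊢
    cases r with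
    | zero => simp [List.intersperse]
    | succ r =>
      simp only [List.replicate_succ, List.intersperse] at this ⊢
      simpa using this

lemma B_zero_right (r : ℕ) : B (r + 1) 0 = {List.replicate r x1} := by
  have h : (Finset.Nat.antidiagonalTuple (r + 1) 0).val = {(0 : Fin (r + 1) → ℕ)} :=
    congrArg Finset.val (Finset.Nat.antidiagonalTuple_zero_right (r + 1))
  rw [B, h]
  simp only [Multiset.map_singleton, Pi.zero_apply, List.replicate_zero]
  rw [show (List.ofFn fun _ : Fin (r + 1) => ([] : List Bool)) = List.replicate (r + 1) [] by
    rw [List.ofFn_const]]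
  rw [intercalate_replicate_nil]

lemma intercalate_cons {α : Type*} (a : α) (l : List α) (L : List (List α)) (hL : L ≠ []) :
    List.intercalate [a] (l :: L) = l ++ a :: List.intercalate [a] L := by
  cases L with
  | nil => exact absurd rfl hL
  | cons l' L' => simp [List.intercalate, List.intersperse]

lemma map_sum' {ι α β : Type*} (f : α → β) (s : Finset ι) (g : ι → Multiset α) :
    (∑ i ∈ s, g i).map f = ∑ i ∈ s, (g i).map f :=
  map_sum (Multiset.mapAddMonoidHom f) g s

lemma B_succ (r k : ℕ) :
    B (r + 2) k = ∑ p ∈ Finset.HasAntidiagonal.antidiagonal k,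
      (B (r + 1) p.2).map fun w => List.replicate p.1 x0 ++ x1 :: w := by
  have hval : (Finset.Nat.antidiagonalTuple (r + 2) k).val =
      ((Finset.HasAntidiagonal.antidiagonal k).val.bind fun ni =>
        (Finset.Nat.antidiagonalTuple (r + 1) ni.2).val.map (Fin.cons ni.1)) :=
    (Multiset.coe_bind (List.Nat.antidiagonal k)
      (fun ni => (List.Nat.antidiagonalTuple (r + 1) ni.2).map
        (fun t => Fin.cons (α := fun _ => ℕ) ni.1 t))).symm
  rw [B, hval, Multiset.map_bind]
  rw [show (∑ p ∈ Finset.HasAntidiagonal.antidiagonal k,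
      (B (r + 1) p.2).map fun w => List.replicate p.1 x0 ++ x1 :: w) =
      (Finset.HasAntidiagonal.antidiagonal k).val.bind (fun p =>
        (B (r + 1) p.2).map fun w => List.replicate p.1 x0 ++ x1 :: w) from rfl]
  congr 1
  funext p
  rw [Multiset.map_map, B, Multiset.map_map]
  apply Multiset.map_congr rfl
  intro f _
  simp only [Function.comp_apply]
  rw [List.ofFn_succ]
  simp only [Fin.cons_zero, Fin.cons_succ]
  rw [intercalate_cons]
  rw [List.ofFn_succ]
  exact List.cons_ne_nil _ _

lemma B_rec (r k : ℕ) :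
    B (r + 2) (k + 1) =
      (B (r + 1) (k + 1)).map (x1 :: ·) + (B (r + 2) k).map (x0 :: ·) := by
  rw [B_succ, B_succ, Finset.Nat.antidiagonal_succ, Finset.sum_cons, Finset.sum_map,
    map_sum']
  congr 1 <;> simp [List.replicate_succ]

lemma shuffle_x1_x0 : ∀ m k : ℕ,
    shuffle (List.replicate m x1) (List.replicate k x0) = B (m + 1) k
  | 0, k => by
    rw [List.replicate_zero, shuffle_nil_left, B_one]
  | m + 1, 0 => by
    rw [List.replicate_zero, shuffle_nil_right, B_zero_right]
  | m + 1, k + 1 => by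
    rw [List.replicate_succ, List.replicate_succ, shuffle_cons_cons,
      ← List.replicate_succ, ← List.replicate_succ,
      shuffle_x1_x0 m (k + 1), shuffle_x1_x0 (m + 1) k, B_rec]
termination_by m k => m + k

/-- The auxiliary sum appearing on the right-hand side. -/
def G (k m ν : ℕ) : Multiset (List Bool) :=
  ∑ i ∈ Finset.range (m + 1),
    Nat.choose (i + ν) ν •
      (B (m - i + 1) k).map fun w => List.replicate (i + ν + 1) x1 ++ w

lemma map_cons_G (k m ν : ℕ) :
    (G k m ν).map (x1 :: ·) =
      ∑ i ∈ Finset.range (m + 1),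
        Nat.choose (i + ν) ν •
          (B (m - i + 1) k).map fun w => List.replicate (i + ν + 2) x1 ++ w := by
  rw [G, map_sum']
  apply Finset.sum_congr rfl
  intro i _
  rw [Multiset.map_nsmul, Multiset.map_map]
  apply congr_arg
  apply Multiset.map_congr rfl
  intro w _
  show x1 :: (List.replicate (i + ν + 1) x1 ++ w) = List.replicate (i + ν + 2) x1 ++ w
  rw [show i + ν + 2 = i + ν + 1 + 1 from rfl]
  simp [List.replicate_succ]

lemma G_zero_rec (k m : ℕ) :
    G k (m + 1) 0 = (G k m 0).map (x1 :: ·) + (B (m + 2) k).map (x1 :: ·) := by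
  rw [map_cons_G]
  rw [G, Finset.sum_range_succ' (fun i => Nat.choose (i + 0) 0 •
      (B (m + 1 - i + 1) k).map fun w => List.replicate (i + 0 + 1) x1 ++ w) (m + 1)]
  congr 1
  · apply Finset.sum_congr rfl
    intro i _
    simp only [Nat.choose_zero_right, one_smul, Nat.succ_sub_succ]

lemma G_succ_rec (k m ν : ℕ) :
    G k (m + 1) (ν + 1) =
      (G k m (ν + 1)).map (x1 :: ·) + (G k (m + 1) ν).map (x1 :: ·) := by
  rw [map_cons_G, map_cons_G]
  rw [G, Finset.sum_range_succ' (fun i => Nat.choose (i + (ν + 1)) (ν + 1) •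
      (B (m + 1 - i + 1) k).map fun w => List.replicate (i + (ν + 1) + 1) x1 ++ w) (m + 1),
    Finset.sum_range_succ' (fun i => Nat.choose (i + ν) ν •
      (B (m + 1 - i + 1) k).map fun w => List.replicate (i + ν + 2) x1 ++ w) (m + 1)]
  rw [show ∀ a b c : Multiset (List Bool), a + (b + c) = a + b + c from
    fun a b c => (add_assoc a b c).symm]
  congr 1
  · rw [← Finset.sum_add_distrib]
    apply Finset.sum_congr rfl
    intro i _
    simp only [Nat.succ_sub_succ]
    rw [
      show i + 1 + (ν + 1) + 1 = i + ν + 3 by omega,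
      show i + (ν + 1) + 2 = i + ν + 3 by omega,
      show i + 1 + ν + 2 = i + ν + 3 by omega,
      show i + 1 + (ν + 1) = (i + ν + 1) + 1 by omega,
      show i + (ν + 1) = i + ν + 1 by omega,
      show i + 1 + ν = i + ν + 1 by omega,
      Nat.choose_succ_succ (i + ν + 1) ν, add_nsmul, add_comm]
  · rw [show (0 : ℕ) + (ν + 1) = ν + 1 by omega, show (0 : ℕ) + ν = ν by omega,
      Nat.choose_self, Nat.choose_self]

lemma shuffle_main (k : ℕ) : ∀ m ν : ℕ,
    shuffle (List.replicate m x1)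
      (List.replicate (ν + 1) x1 ++ List.replicate k x0) = G k m ν
  | 0, ν => by
    rw [List.replicate_zero, shuffle_nil_left, G]
    rw [Finset.sum_range_one]
    simp only [Nat.zero_add, Nat.sub_zero, Nat.choose_self, one_smul, B_one,
      Multiset.map_singleton]
  | m + 1, 0 => by
    rw [List.replicate_succ,
      show List.replicate 1 x1 ++ List.replicate k x0 = x1 :: List.replicate k x0 from rfl,
      shuffle_cons_cons,
      show x1 :: List.replicate k x0
        = List.replicate (0 + 1) x1 ++ List.replicate k x0 from rfl,
      shuffle_main k m 0, ← List.replicate_succ, shuffle_x1_x0 (m + 1) k, G_zero_rec]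
  | m + 1, ν + 1 => by
    rw [List.replicate_succ,
      show List.replicate (ν + 1 + 1) x1 ++ List.replicate k x0
        = x1 :: (List.replicate (ν + 1) x1 ++ List.replicate k x0) by
          rw [List.replicate_succ, List.cons_append],
      shuffle_cons_cons,
      show x1 :: (List.replicate (ν + 1) x1 ++ List.replicate k x0)
        = List.replicate (ν + 1 + 1) x1 ++ List.replicate k x0 by
          simp [List.replicate_succ],
      shuffle_main k m (ν + 1), ← List.replicate_succ,
      shuffle_main k (m + 1) ν, G_succ_rec]
termination_by m ν => m + ν

theorem shuffle_x1_pow_x1_pow_x0_pow (m n k : ℕ) (hn : 1 ≤ n) (hk : 1 ≤ k) :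
    shuffle (List.replicate m x1) (List.replicate n x1 ++ List.replicate k x0) =
      ∑ p ∈ Finset.HasAntidiagonal.antidiagonal m,
        Nat.choose (p.1 + n - 1) (n - 1) •
          (B (p.2 + 1) k).map (fun w => List.replicate (p.1 + n) x1 ++ w) := by
  obtain ⟨ν, rfl⟩ : ∃ ν, n = ν + 1 := ⟨n - 1, by omega⟩
  rw [shuffle_main k m ν, Finset.Nat.sum_antidiagonal_eq_sum_range_succ_mk, G]
  apply Finset.sum_congr rfl
  intro i _
  rw [show i + (ν + 1) - 1 = i + ν by omega, show ν + 1 - 1 = ν by omega,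
    show i + (ν + 1) = i + ν + 1 by omega]
end

section
/- For integers m ≥ 0 and n, k, s ≥ 1, one has x₁^m ш (x₁^n x₀^k x₁^s) = Σ_{m₁+m₂+m₃=m, m_i ≥ 0} C(m₁+n-1, n-1) · C(m₃+s-1, s-1) · x₁^{m₁+n} 𝔅_{m₂+1}^{k} x₁^{m₃+s}, an identity of multisets of words, where a binomial coefficient c multiplying a multiset means the multiset repeated c times. -/
/-! ### Auxiliary machinery -/

section Aux

set_option linter.unnecessarySeqFocus false

lemma mtuple_succ (k n : ℕ) :
    (Finset.Nat.antidiagonalTuple (k+1) n).val =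
      (Finset.HasAntidiagonal.antidiagonal n).val.bind fun p =>
        (Finset.Nat.antidiagonalTuple k p.2).val.map (Fin.cons p.1) := by
  have h1 : (Finset.Nat.antidiagonalTuple (k+1) n).val
      = (↑(List.Nat.antidiagonalTuple (k+1) n) : Multiset _) := rfl
  have h2 : (Finset.HasAntidiagonal.antidiagonal n).val = (↑(List.Nat.antidiagonal n) : Multiset _) := rfl
  have h3 : ∀ p : ℕ × ℕ, (Finset.Nat.antidiagonalTuple k p.2).val
      = (↑(List.Nat.antidiagonalTuple k p.2) : Multiset _) := fun _ => rfl
  simp only [h1, h2, h3, Multiset.map_coe, Multiset.coe_bind]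
  rfl

/-- The word-building function underlying `B`. -/
def wd (r : ℕ) (f : Fin r → ℕ) : List Bool :=
  List.intercalate [x1] (List.ofFn fun i => List.replicate (f i) x0)

lemma B_eq (r m : ℕ) : B r m = (Finset.Nat.antidiagonalTuple r m).val.map (wd r) := rfl

lemma wd_one (f : Fin 1 → ℕ) : wd 1 f = List.replicate (f 0) x0 := by
  simp [wd, List.intercalate]

lemma wd_cons (r : ℕ) (a : ℕ) (g : Fin (r+1) → ℕ) :
    wd (r+2) (Fin.cons a g) = List.replicate a x0 ++ x1 :: wd (r+1) g := by
  have key : ∀ (A B : List Bool) t, List.intercalate [x1] (A :: B :: t)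
      = A ++ [x1] ++ List.intercalate [x1] (B :: t) := by
    intro A B t; simp [List.intercalate, List.intersperse]
  unfold wd
  rw [List.ofFn_succ]
  simp only [Fin.cons_zero, Fin.cons_succ]
  rw [List.ofFn_succ (f := fun i : Fin (r+1) => List.replicate (g i) x0), key]
  simp [List.ofFn_succ]

lemma wd_cons_succ (r a : ℕ) (g : Fin r → ℕ) :
    wd (r+1) (Fin.cons (a+1) g) = x0 :: wd (r+1) (Fin.cons a g) := by
  cases r with
  | zero => rw [wd_one, wd_one]; simp [List.replicate_succ]
  | succ t =>
      rw [wd_cons, wd_cons, List.replicate_succ]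
      · simp

lemma B_zero_succ (n : ℕ) : B 0 (n+1) = 0 := by
  rw [B_eq, show Finset.Nat.antidiagonalTuple 0 (n+1) = ∅ from
    Finset.Nat.antidiagonalTuple_zero_succ n]
  rfl

lemma wd_zero (r : ℕ) : wd (r+1) 0 = List.replicate r x1 := by
  induction r with
  | zero => rw [show (0 : Fin 1 → ℕ) = ![0] from by ext i; fin_cases i <;> rfl, wd_one]; rfl
  | succ t ih =>
      rw [show (0 : Fin (t+2) → ℕ) = Fin.cons 0 0 from by
        ext i; refine Fin.cases ?_ ?_ i <;> simp, wd_cons, ih]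
      simp [List.replicate_succ]

lemma B_succ_zero (r : ℕ) : B (r+1) 0 = {List.replicate r x1} := by
  rw [B_eq, show Finset.Nat.antidiagonalTuple (r+1) 0 = {0} from
    Finset.Nat.antidiagonalTuple_zero_right (r+1)]
  simp [wd_zero]

lemma B_succ_s10 (r k : ℕ) :
    B (r+1) (k+1) = (B r (k+1)).map (x1 :: ·) + (B (r+1) k).map (x0 :: ·) := by
  rw [B_eq, mtuple_succ]
  have hval : (Finset.HasAntidiagonal.antidiagonal (k+1)).val
      = (0, k+1) ::ₘ (Finset.HasAntidiagonal.antidiagonal k).val.map (Prod.map Nat.succ id) :=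
    Multiset.Nat.antidiagonal_succ
  rw [hval, Multiset.cons_bind, Multiset.map_add, Multiset.bind_map, Multiset.map_bind]
  congr 1
  · cases r with
    | zero =>
        rw [B_zero_succ]
        simp [show Finset.Nat.antidiagonalTuple 0 (k+1) = ∅ from
          Finset.Nat.antidiagonalTuple_zero_succ k]
    | succ t =>
        rw [B_eq]
        simp only [Multiset.map_map]
        apply Multiset.map_congr rfl
        intro f _
        show wd (t+2) (Fin.cons 0 f) = x1 :: wd (t+1) f
        rw [wd_cons]
        rfl
  · rw [B_eq, mtuple_succ, Multiset.map_bind, Multiset.map_bind]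
    apply congrArg
    funext p
    simp only [Multiset.map_map, Prod.map, id]
    apply Multiset.map_congr rfl
    intro f _
    show wd (r+1) (Fin.cons (p.1+1) f) = x0 :: wd (r+1) (Fin.cons p.1 f)
    exact wd_cons_succ r p.1 f

lemma shuffle_rep (x : Bool) : ∀ a b, shuffle (List.replicate a x) (List.replicate b x)
    = (a+b).choose a • ({List.replicate (a+b) x} : Multiset (List Bool)) := by
  intro a
  induction a with
  | zero => intro b; simp [shuffle_nil_left]
  | succ a iha =>
    intro b
    induction b with
    | zero => simp [shuffle_nil_right]
    | succ b ihb =>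
      rw [List.replicate_succ (a := x) (n := a), List.replicate_succ (a := x) (n := b), shuffle_cons_cons,
        ← List.replicate_succ (a := x) (n := b), ← List.replicate_succ (a := x) (n := a), iha, ihb,
        Multiset.map_nsmul, Multiset.map_nsmul, Multiset.map_singleton, Multiset.map_singleton]
      have e1 : x :: List.replicate (a+(b+1)) x = List.replicate (a+1+(b+1)) x := by
        rw [show a+1+(b+1) = (a+(b+1))+1 by omega, List.replicate_succ]
      have e2 : x :: List.replicate (a+1+b) x = List.replicate (a+1+(b+1)) x := by
        rw [show a+1+(b+1) = (a+1+b)+1 by omega, List.replicate_succ]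
      rw [e1, e2, ← add_nsmul]
      have hc : (a+(b+1)).choose a + (a+1+b).choose (a+1) = (a+1+(b+1)).choose (a+1) := by
        rw [show a+(b+1) = a+b+1 by omega, show a+1+b = a+b+1 by omega,
          show a+1+(b+1) = (a+b+1)+1 by omega]
        exact (Nat.choose_succ_succ (a+b+1) a).symm
      rw [hc]

lemma msum_map {α β : Type*} (s : Finset β) (g : β → Multiset (List α)) (f : List α → List α) :
    Multiset.map f (∑ p ∈ s, g p) = ∑ p ∈ s, (g p).map f :=
  map_sum (Multiset.mapAddMonoidHom f) g s

lemma cons_rep (T : ℕ) : x1 :: List.replicate T x1 = List.replicate (T+1) x1 :=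
  (List.replicate_succ (a := x1) (n := T)).symm

lemma hockey (σ : ℕ) : ∀ M,
    (∑ p ∈ Finset.HasAntidiagonal.antidiagonal M, (p.2+σ).choose σ) = (M+σ+1).choose (σ+1) := by
  intro M
  induction M with
  | zero => simp
  | succ M ih =>
      rw [Finset.Nat.sum_antidiagonal_succ]
      simp only at ih ⊢
      rw [ih, show M+1+σ = M+σ+1 by omega]
      exact (Nat.choose_succ_succ (M+σ+1) σ).symm

lemma lemD (v : List Bool) (m : ℕ) : ∀ n,
    shuffle (List.replicate m x1) (List.replicate (n+1) x1 ++ v)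
    = ∑ p ∈ Finset.HasAntidiagonal.antidiagonal m, (p.1 + n).choose n •
        (shuffle (List.replicate p.2 x1) v).map (List.replicate (p.1 + n + 1) x1 ++ ·) := by
  induction m with
  | zero =>
      intro n
      simp [shuffle_nil_left]
  | succ m ihm =>
      have unf : ∀ N : ℕ, shuffle (List.replicate (m+1) x1) (List.replicate (N+1) x1 ++ v)
          = (shuffle (List.replicate m x1) (List.replicate (N+1) x1 ++ v)).map (x1 :: ·)
            + (shuffle (List.replicate (m+1) x1) (List.replicate N x1 ++ v)).map (x1 :: ·) := by
        intro N
        conv_lhs => rw [List.replicate_succ (a := x1) (n := m), List.replicate_succ (a := x1) (n := N), List.cons_append,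
          shuffle_cons_cons]
        rw [← List.cons_append, ← List.replicate_succ (a := x1) (n := N), ← List.replicate_succ (a := x1) (n := m)]
      intro n
      induction n with
      | zero =>
          rw [unf 0, ihm 0, Finset.Nat.sum_antidiagonal_succ]
          simp only [Nat.choose_zero_right, one_smul, Nat.add_zero, Nat.zero_add,
            List.replicate_zero, List.nil_append]
          rw [add_comm]
          congr 1
          · rw [msum_map]
            refine Finset.sum_congr rfl fun p _ => ?_
            rw [Multiset.map_map]
            exact Multiset.map_congr rfl fun w _ => rfl
      | succ t ihn =>
          rw [unf (t+1), ihm (t+1), ihn, msum_map, msum_map]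
          simp only [Multiset.map_nsmul, Multiset.map_map]
          have key : (∑ p ∈ Finset.HasAntidiagonal.antidiagonal (m+1), (p.1 + (t+1)).choose (t+1) •
                (shuffle (List.replicate p.2 x1) v).map (List.replicate (p.1 + (t+1) + 1) x1 ++ ·))
              = (∑ p ∈ Finset.HasAntidiagonal.antidiagonal (m+1), (p.1 + t).choose t •
                  (shuffle (List.replicate p.2 x1) v).map (List.replicate (p.1 + (t+1) + 1) x1 ++ ·))
                + ∑ p ∈ Finset.HasAntidiagonal.antidiagonal m, (p.1 + 1 + t).choose (t+1) •
                  (shuffle (List.replicate p.2 x1) v).map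
                    (List.replicate (p.1 + 1 + (t+1) + 1) x1 ++ ·) := by
            rw [show (∑ p ∈ Finset.HasAntidiagonal.antidiagonal (m+1), (p.1 + (t+1)).choose (t+1) •
                (shuffle (List.replicate p.2 x1) v).map (List.replicate (p.1 + (t+1) + 1) x1 ++ ·))
                = ∑ p ∈ Finset.HasAntidiagonal.antidiagonal (m+1), ((p.1 + t).choose t •
                    (shuffle (List.replicate p.2 x1) v).map (List.replicate (p.1 + (t+1) + 1) x1 ++ ·)
                  + (p.1 + t).choose (t+1) •
                    (shuffle (List.replicate p.2 x1) v).map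
                      (List.replicate (p.1 + (t+1) + 1) x1 ++ ·))
              from Finset.sum_congr rfl fun p _ => by
                rw [← add_smul, show p.1 + (t+1) = (p.1+t)+1 by omega, Nat.choose_succ_succ]]
            rw [Finset.sum_add_distrib]
            congr 1
            rw [Finset.Nat.sum_antidiagonal_succ]
            simp only [Nat.zero_add, Nat.choose_succ_self, zero_smul, zero_add]
          rw [key]
          rw [add_comm]
          congr 1
          · refine Finset.sum_congr rfl fun p _ => ?_
            have hc : (p.1+(t+1)).choose (t+1) = (p.1+1+t).choose (t+1) := by congr 1; omega
            rw [hc]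
            congr 1
            refine Multiset.map_congr rfl fun w _ => ?_
            show x1 :: (List.replicate (p.1 + (t+1) + 1) x1 ++ w)
                = List.replicate (p.1 + 1 + (t+1) + 1) x1 ++ w
            rw [← List.cons_append, cons_rep]
            congr 2
            omega

lemma lemC (σ : ℕ) (m : ℕ) : ∀ k,
    shuffle (List.replicate m x1) (List.replicate (k+1) x0 ++ List.replicate (σ+1) x1)
    = ∑ p ∈ Finset.HasAntidiagonal.antidiagonal m, (p.2 + σ).choose σ •
        (B (p.1+1) (k+1)).map (· ++ List.replicate (p.2 + σ + 1) x1) := by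
  induction m with
  | zero =>
      intro k
      simp [shuffle_nil_left, B_one]
  | succ m ihm =>
      have unf : ∀ K : ℕ, shuffle (List.replicate (m+1) x1)
            (List.replicate (K+1) x0 ++ List.replicate (σ+1) x1)
          = (shuffle (List.replicate m x1)
              (List.replicate (K+1) x0 ++ List.replicate (σ+1) x1)).map (x1 :: ·)
            + (shuffle (List.replicate (m+1) x1)
              (List.replicate K x0 ++ List.replicate (σ+1) x1)).map (x0 :: ·) := by
        intro K
        conv_lhs => rw [List.replicate_succ (a := x1) (n := m), List.replicate_succ (a := x0) (n := K), List.cons_append,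
          shuffle_cons_cons]
        rw [← List.cons_append, ← List.replicate_succ (a := x0) (n := K), ← List.replicate_succ (a := x1) (n := m)]
      intro k
      induction k with
      | zero =>
          rw [unf 0, ihm 0]
          simp only [List.replicate_zero, List.nil_append]
          rw [shuffle_rep x1 (m+1) (σ+1)]
          have key : (∑ p ∈ Finset.HasAntidiagonal.antidiagonal (m+1), (p.2 + σ).choose σ •
                (B (p.1+1) (0+1)).map (· ++ List.replicate (p.2 + σ + 1) x1))
              = (∑ p ∈ Finset.HasAntidiagonal.antidiagonal m, (p.2 + σ).choose σ •
                  ((B (p.1+1) 1).map (x1 :: ·)).map (· ++ List.replicate (p.2 + σ + 1) x1))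
                + ∑ p ∈ Finset.HasAntidiagonal.antidiagonal (m+1), (p.2 + σ).choose σ •
                  ((B (p.1+1) 0).map (x0 :: ·)).map (· ++ List.replicate (p.2 + σ + 1) x1) := by
            rw [show (∑ p ∈ Finset.HasAntidiagonal.antidiagonal (m+1), (p.2 + σ).choose σ •
                  (B (p.1+1) (0+1)).map (· ++ List.replicate (p.2 + σ + 1) x1))
                = ∑ p ∈ Finset.HasAntidiagonal.antidiagonal (m+1), ((p.2 + σ).choose σ •
                    ((B p.1 1).map (x1 :: ·)).map (· ++ List.replicate (p.2 + σ + 1) x1)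
                  + (p.2 + σ).choose σ •
                    ((B (p.1+1) 0).map (x0 :: ·)).map (· ++ List.replicate (p.2 + σ + 1) x1))
              from Finset.sum_congr rfl fun p _ => by
                rw [show (0:ℕ)+1 = 1 from rfl, show (1:ℕ) = 0+1 from rfl, B_succ_s10 p.1 0,
                  Multiset.map_add, smul_add]]
            rw [Finset.sum_add_distrib]
            congr 1
            rw [Finset.Nat.sum_antidiagonal_succ]
            simp only [B_zero_succ, Multiset.map_zero, smul_zero, zero_add]
          rw [key]
          congr 1
          · rw [msum_map]
            simp only [Multiset.map_nsmul, Multiset.map_map]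
            refine Finset.sum_congr rfl fun p _ => ?_
            congr 1
          · have const : ∀ p ∈ Finset.HasAntidiagonal.antidiagonal (m+1), (p.2 + σ).choose σ •
                  ((B (p.1+1) 0).map (x0 :: ·)).map (· ++ List.replicate (p.2 + σ + 1) x1)
                = (p.2 + σ).choose σ •
                  ({x0 :: List.replicate (m+σ+2) x1} : Multiset (List Bool)) := by
              intro p hp
              have hsum : p.1 + p.2 = m+1 := Finset.HasAntidiagonal.mem_antidiagonal.mp hp
              rw [B_succ_zero, Multiset.map_singleton, Multiset.map_singleton]
              congr 2
              rw [List.cons_append, ← List.replicate_add]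
              congr 2
              omega
            rw [Finset.sum_congr rfl const, ← Finset.sum_smul, hockey σ (m+1),
              Multiset.map_nsmul, Multiset.map_singleton]
            rw [show m+1+(σ+1) = m+σ+2 by omega]
            congr 1
            have h := Nat.choose_symm (show m+1 ≤ m+σ+2 by omega)
            rw [show m+σ+2 - (m+1) = σ+1 by omega] at h
            rw [show m+1+σ+1 = m+σ+2 by omega, h]
      | succ K ihk =>
          rw [unf (K+1), ihm (K+1), ihk, msum_map, msum_map]
          simp only [Multiset.map_nsmul, Multiset.map_map]
          have key : (∑ p ∈ Finset.HasAntidiagonal.antidiagonal (m+1), (p.2 + σ).choose σ •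
                (B (p.1+1) (K+1+1)).map (· ++ List.replicate (p.2 + σ + 1) x1))
              = (∑ p ∈ Finset.HasAntidiagonal.antidiagonal m, (p.2 + σ).choose σ •
                  ((B (p.1+1) (K+2)).map (x1 :: ·)).map (· ++ List.replicate (p.2 + σ + 1) x1))
                + ∑ p ∈ Finset.HasAntidiagonal.antidiagonal (m+1), (p.2 + σ).choose σ •
                  ((B (p.1+1) (K+1)).map (x0 :: ·)).map (· ++ List.replicate (p.2 + σ + 1) x1) := by
            rw [show (∑ p ∈ Finset.HasAntidiagonal.antidiagonal (m+1), (p.2 + σ).choose σ •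
                  (B (p.1+1) (K+1+1)).map (· ++ List.replicate (p.2 + σ + 1) x1))
                = ∑ p ∈ Finset.HasAntidiagonal.antidiagonal (m+1), ((p.2 + σ).choose σ •
                    ((B p.1 (K+2)).map (x1 :: ·)).map (· ++ List.replicate (p.2 + σ + 1) x1)
                  + (p.2 + σ).choose σ •
                    ((B (p.1+1) (K+1)).map (x0 :: ·)).map (· ++ List.replicate (p.2 + σ + 1) x1))
              from Finset.sum_congr rfl fun p _ => by
                rw [B_succ_s10 p.1 (K+1), Multiset.map_add, smul_add]]
            rw [Finset.sum_add_distrib]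
            congr 1
            rw [Finset.Nat.sum_antidiagonal_succ]
            simp only [B_zero_succ, Multiset.map_zero, smul_zero, zero_add]
          rw [key]
          congr 1
          · refine Finset.sum_congr rfl fun p _ => ?_
            simp only [Multiset.map_map]
            congr 1
          · refine Finset.sum_congr rfl fun p _ => ?_
            simp only [Multiset.map_map]
            congr 1

lemma fsum_tuple_succ {M : Type*} [AddCommMonoid M] (k n : ℕ) (g : (Fin (k+1) → ℕ) → M) :
    (∑ f ∈ Finset.Nat.antidiagonalTuple (k+1) n, g f)
      = ∑ p ∈ Finset.HasAntidiagonal.antidiagonal n,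
          ∑ f ∈ Finset.Nat.antidiagonalTuple k p.2, g (Fin.cons p.1 f) := by
  rw [Finset.sum, Finset.sum, mtuple_succ, Multiset.map_bind, Multiset.sum_bind]
  congr 1
  apply Multiset.map_congr rfl
  intro p _
  rw [Multiset.map_map]
  rfl

end Aux

theorem shuffle_x1_pow_x1x0x1 (m n k s : ℕ) (hn : 1 ≤ n) (hk : 1 ≤ k) (hs : 1 ≤ s) :
    shuffle (List.replicate m x1)
        (List.replicate n x1 ++ List.replicate k x0 ++ List.replicate s x1) =
      ∑ f ∈ Finset.Nat.antidiagonalTuple 3 m,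
        (Nat.choose (f 0 + n - 1) (n - 1) * Nat.choose (f 2 + s - 1) (s - 1)) •
          (B (f 1 + 1) k).map
            (fun w => List.replicate (f 0 + n) x1 ++ w ++ List.replicate (f 2 + s) x1) := by
  obtain ⟨n', rfl⟩ : ∃ n', n = n'+1 := ⟨n-1, by omega⟩
  obtain ⟨k', rfl⟩ : ∃ k', k = k'+1 := ⟨k-1, by omega⟩
  obtain ⟨s', rfl⟩ : ∃ s', s = s'+1 := ⟨s-1, by omega⟩
  have rhs1 : ∀ f ∈ Finset.Nat.antidiagonalTuple 3 m,
      ((f 0 + (n'+1) - 1).choose (n'+1-1) * ((f 2 + (s'+1) - 1).choose (s'+1-1))) •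
        (B (f 1 + 1) (k'+1)).map
          (fun w => List.replicate (f 0 + (n'+1)) x1 ++ w ++ List.replicate (f 2 + (s'+1)) x1)
      = ((f 0 + n').choose n' * (f 2 + s').choose s') •
        (B (f 1 + 1) (k'+1)).map
          (fun w => List.replicate (f 0 + n' + 1) x1 ++ (w ++ List.replicate (f 2 + s' + 1) x1)) := by
    intro f _
    rw [show f 0 + (n'+1) - 1 = f 0 + n' by omega, show n'+1-1 = n' by omega,
        show f 2 + (s'+1) - 1 = f 2 + s' by omega, show s'+1-1 = s' by omega]
    congr 1
    refine Multiset.map_congr rfl fun w _ => ?_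
    rw [List.append_assoc]
    rfl
  rw [Finset.sum_congr rfl rhs1, fsum_tuple_succ 2 m, List.append_assoc,
    lemD (List.replicate (k'+1) x0 ++ List.replicate (s'+1) x1) m n']
  have inner : ∀ p ∈ Finset.HasAntidiagonal.antidiagonal m, (p.1 + n').choose n' •
        (shuffle (List.replicate p.2 x1)
          (List.replicate (k'+1) x0 ++ List.replicate (s'+1) x1)).map
          (List.replicate (p.1 + n' + 1) x1 ++ ·)
      = (p.1 + n').choose n' • (∑ q ∈ Finset.HasAntidiagonal.antidiagonal p.2, (q.2 + s').choose s' •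
          (B (q.1+1) (k'+1)).map (· ++ List.replicate (q.2 + s' + 1) x1)).map
          (List.replicate (p.1 + n' + 1) x1 ++ ·) := by
    intro p _
    rw [lemC s' p.2 k']
  rw [Finset.sum_congr rfl inner]
  refine Finset.sum_congr rfl fun p _ => ?_
  rw [msum_map, fsum_tuple_succ 1 p.2, Finset.smul_sum]
  refine Finset.sum_congr rfl fun q _ => ?_
  rw [show Finset.Nat.antidiagonalTuple 1 q.2 = {![q.2]} from
      Finset.Nat.antidiagonalTuple_one q.2,
    Finset.sum_singleton, Multiset.map_nsmul, Multiset.map_map, smul_smul]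
  rfl
end
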